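/- Let V be an ℵ₀-dimensional real vector space endowed with the trivial (indiscrete) topology, and let X := ℝ^∞ × V with the product topology. Then X is a topological vector space with dim(X) = ℵ₀ < w(X) (in particular X is not first-countable), and there exists a countably infinite family {X_n}_{n∈ℕ} of dense linear subspaces of X such that X_i ∩ X_j = {0} whenever i ≠ j. Concretely, if {e_m : m ∈ ℕ} is the canonical basis of ℝ^∞ and {f_m^n : m, n ∈ ℕ} is a basis of V, one may take X_n := span({(e_m, f_m^n) : m ∈ ℕ}). -/

import Mathlib

open Cardinal

/-- The submodule of `ℕ → ℝ` consisting of finitely supported sequences. -/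
def RinfSubmodule : Submodule ℝ (ℕ → ℝ) where
  carrier := { f | ∃ N : ℕ, ∀ n, N ≤ n → f n = 0 }
  add_mem' := by
    rintro f g ⟨N, hN⟩ ⟨M, hM⟩
    exact ⟨max N M, fun n hn => by
      simp [hN n (le_trans (le_max_left _ _) hn), hM n (le_trans (le_max_right _ _) hn)]⟩
  zero_mem' := ⟨0, fun n _ => rfl⟩
  smul_mem' := by
    rintro c f ⟨N, hN⟩
    exact ⟨N, fun n hn => by simp [hN n hn]⟩

/-- `ℝ^∞`, the space of finitely supported real sequences, as a type synonym (so that it does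
not inherit the subspace topology; it will be equipped with the inductive limit topology). -/
def Rinf : Type := RinfSubmodule

instance : AddCommGroup Rinf := inferInstanceAs (AddCommGroup RinfSubmodule)
noncomputable instance : Module ℝ Rinf := inferInstanceAs (Module ℝ RinfSubmodule)

/-- The inclusion `u_n : ℝⁿ → ℝ^∞`. -/
def uMap (n : ℕ) (x : Fin n → ℝ) : Rinf :=
  (⟨fun i => if h : i < n then x ⟨i, h⟩ else 0,
    ⟨n, fun _ hm => dif_neg (Nat.not_lt.mpr hm)⟩⟩ : RinfSubmodule)

/-- The inductive limit (final) topology on `ℝ^∞` with respect to the inclusions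
`u_n : ℝⁿ → ℝ^∞`, where each `ℝⁿ` carries the Euclidean (product) topology. -/
instance RinfTopology : TopologicalSpace Rinf :=
  ⨆ n : ℕ, TopologicalSpace.coinduced (uMap n) inferInstance

/-- The canonical basis vector `e_m` of `ℝ^∞` (`1` in coordinate `m`, `0` elsewhere). -/
noncomputable def eRinf (m : ℕ) : Rinf :=
  (⟨fun i => if i = m then 1 else 0, ⟨m + 1, fun k hk => if_neg (by omega)⟩⟩ : RinfSubmodule)

/-- The weight of a topological space: the smallest cardinality of a basis for its topology. -/
noncomputable def tsWeight (X : Type*) [TopologicalSpace X] : Cardinal :=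
  sInf { c : Cardinal | ∃ B : Set (Set X),
    TopologicalSpace.IsTopologicalBasis B ∧ #↥B = c }


lemma Rinf.val_add (x y : Rinf) : (x + y).1 = x.1 + y.1 := rfl
lemma Rinf.val_smul (c : ℝ) (x : Rinf) : (c • x).1 = c • x.1 := rfl
lemma Rinf.val_zero : (0 : Rinf).1 = 0 := rfl
lemma Rinf.val_sub (x y : Rinf) : (x - y).1 = x.1 - y.1 := rfl
lemma Rinf.ext' {x y : Rinf} (h : x.1 = y.1) : x = y := Subtype.ext h

lemma isOpen_Rinf_iff {s : Set Rinf} : IsOpen s ↔ ∀ n, IsOpen (uMap n ⁻¹' s) := by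
  constructor
  · intro h n
    exact (continuous_iSup_rng (i := n) continuous_coinduced_rng).isOpen_preimage s h
  · intro h
    exact isOpen_iSup_iff.mpr fun n => (isOpen_coinduced (f := uMap n)).mpr (h n)

/-- the gauge function -/
noncomputable def qF (ε : ℕ → ℝ) (x : Rinf) : ℝ := ∑' m, |x.1 m| / ε m

lemma qF_summable (ε : ℕ → ℝ) (x : Rinf) : Summable (fun m => |x.1 m| / ε m) := by
  obtain ⟨N, hN⟩ := x.2
  refine summable_of_ne_finset_zero (s := Finset.range N) (fun m hm => ?_)
  rw [hN m (by simpa using hm)]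
  simp

lemma qF_nonneg (ε : ℕ → ℝ) (hε : ∀ i, 0 < ε i) (x : Rinf) : 0 ≤ qF ε x :=
  tsum_nonneg fun m => div_nonneg (abs_nonneg _) (hε m).le

lemma qF_zero (ε : ℕ → ℝ) : qF ε 0 = 0 := by
  simp [qF, Rinf.val_zero]

lemma qF_add_le (ε : ℕ → ℝ) (hε : ∀ i, 0 < ε i) (x y : Rinf) :
    qF ε (x + y) ≤ qF ε x + qF ε y := by
  have h1 := qF_summable ε x
  have h2 := qF_summable ε y
  calc qF ε (x + y) ≤ ∑' m, (|x.1 m| / ε m + |y.1 m| / ε m) := by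
        refine Summable.tsum_le_tsum (fun m => ?_) (qF_summable ε (x+y)) (h1.add h2)
        rw [Rinf.val_add]
        have : |x.1 m + y.1 m| ≤ |x.1 m| + |y.1 m| := abs_add_le _ _
        have hp := (hε m).le
        calc |(x.1 + y.1) m| / ε m = |x.1 m + y.1 m| / ε m := rfl
          _ ≤ (|x.1 m| + |y.1 m|) / ε m := by gcongr
          _ = |x.1 m| / ε m + |y.1 m| / ε m := add_div _ _ _
    _ = qF ε x + qF ε y := Summable.tsum_add h1 h2

lemma qF_smul (ε : ℕ → ℝ) (c : ℝ) (x : Rinf) : qF ε (c • x) = |c| * qF ε x := by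
  rw [qF, qF, ← tsum_mul_left]
  congr 1; funext m
  rw [Rinf.val_smul]
  show |c * x.1 m| / ε m = |c| * (|x.1 m| / ε m)
  rw [abs_mul, mul_div_assoc]

lemma qF_eq_sum (ε : ℕ → ℝ) (x : Rinf) (N : ℕ) (hN : ∀ m, N ≤ m → x.1 m = 0) :
    qF ε x = ∑ m ∈ Finset.range N, |x.1 m| / ε m := by
  refine tsum_eq_sum (fun m hm => ?_)
  rw [hN m (by simpa using hm)]
  simp

lemma uMap_val (n : ℕ) (y : Fin n → ℝ) (m : ℕ) :
    (uMap n y).1 m = if h : m < n then y ⟨m, h⟩ else 0 := rfl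

lemma qF_uMap (ε : ℕ → ℝ) (n : ℕ) (y : Fin n → ℝ) :
    qF ε (uMap n y) = ∑ i : Fin n, |y i| / ε (i : ℕ) := by
  rw [qF_eq_sum ε (uMap n y) n (fun m hm => by rw [uMap_val]; exact dif_neg (by omega)),
    ← Fin.sum_univ_eq_sum_range (fun m => |(uMap n y).1 m| / ε m) n]
  refine Finset.sum_congr rfl fun i _ => ?_
  rw [uMap_val]
  simp [i.isLt]

/-- open box -/
def Bset (ε : ℕ → ℝ) (r : ℝ) : Set Rinf := {x | qF ε x < r}

lemma isOpen_Bset (ε : ℕ → ℝ) (r : ℝ) : IsOpen (Bset ε r) := by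
  rw [isOpen_Rinf_iff]
  intro n
  have : uMap n ⁻¹' Bset ε r = (fun y : Fin n → ℝ => ∑ i : Fin n, |y i| / ε (i : ℕ)) ⁻¹' (Set.Iio r) := by
    ext y; simp [Bset, qF_uMap]
  rw [this]
  exact (continuous_finset_sum _ fun i _ => ((continuous_apply i).abs).div_const _).isOpen_preimage _ isOpen_Iio

lemma zero_mem_Bset (ε : ℕ → ℝ) {r : ℝ} (hr : 0 < r) : (0 : Rinf) ∈ Bset ε r := by
  simp [Bset, qF_zero, hr]

/-- auxiliary embedding `(ℝⁿ × ℝ) → ℝ^(n+1)` (a snoc avoiding `Fin.snoc`) -/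
def phiMap (n : ℕ) (p : (Fin n → ℝ) × ℝ) : Fin (n+1) → ℝ :=
  fun i => if h : (i : ℕ) < n then p.1 ⟨i, h⟩ else p.2

lemma continuous_phiMap (n : ℕ) : Continuous (phiMap n) := by
  refine continuous_pi fun i => ?_
  by_cases h : (i : ℕ) < n
  · simpa [phiMap, h, Function.comp_def] using (continuous_apply (⟨i, h⟩ : Fin n)).comp continuous_fst
  · simpa [phiMap, h] using continuous_snd

lemma uMap_phiMap_zero (n : ℕ) (y : Fin n → ℝ) :
    uMap (n+1) (phiMap n (y, 0)) = uMap n y := by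
  refine Rinf.ext' (funext fun k => ?_)
  rw [uMap_val, uMap_val]
  by_cases h : k < n
  · rw [dif_pos (by omega), dif_pos h]
    simp [phiMap, h]
  · by_cases h2 : k < n + 1
    · rw [dif_pos h2, dif_neg h]
      simp [phiMap, h]
    · rw [dif_neg h2, dif_neg h]

lemma step_lemma {U : Set Rinf} {n : ℕ} (hU : IsOpen (uMap (n+1) ⁻¹' U))
    (ε : ℕ → ℝ) (hpos : ∀ i, 0 < ε i)
    (hn : ∀ y : Fin n → ℝ, (∑ i : Fin n, |y i| / ε (i : ℕ)) ≤ 1 → uMap n y ∈ U) :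
    ∃ r > 0, ∀ y : Fin (n+1) → ℝ,
      (∑ i : Fin (n+1), |y i| / (Function.update ε n r) (i : ℕ)) ≤ 1 → uMap (n+1) y ∈ U := by
  set K : Set (Fin n → ℝ) := {y | (∑ i : Fin n, |y i| / ε (i : ℕ)) ≤ 1} with hK
  have hKc : IsCompact K := by
    have hclosed : IsClosed K :=
      (isClosed_le (by fun_prop) continuous_const)
    refine IsCompact.of_isClosed_subset (isCompact_univ_pi fun i => isCompact_Icc
      (a := -(ε (i:ℕ))) (b := ε (i:ℕ))) hclosed ?_
    intro y hy
    refine Set.mem_univ_pi.mpr fun i => ?_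
    have h1 : |y i| / ε (i : ℕ) ≤ 1 := by
      refine le_trans ?_ hy
      refine Finset.single_le_sum (f := fun j : Fin n => |y j| / ε (j : ℕ))
        (fun j _ => div_nonneg (abs_nonneg _) (hpos _).le) (Finset.mem_univ i)
    have h2 : |y i| ≤ ε (i : ℕ) := by
      rw [div_le_one (hpos _)] at h1; exact h1
    exact ⟨neg_le_of_abs_le h2, le_of_abs_le h2⟩
  set O : Set ((Fin n → ℝ) × ℝ) := (fun p => phiMap n p) ⁻¹' (uMap (n+1) ⁻¹' U) with hO
  have hOopen : IsOpen O := (continuous_phiMap n).isOpen_preimage _ hU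
  have hsub : K ×ˢ ({0} : Set ℝ) ⊆ O := by
    rintro ⟨y, t⟩ ⟨hy, ht⟩
    simp only [Set.mem_singleton_iff] at ht
    subst ht
    show uMap (n+1) (phiMap n (y, 0)) ∈ U
    rw [uMap_phiMap_zero]
    exact hn y hy
  obtain ⟨u, v, hu, hv, hKu, h0v, huv⟩ :=
    generalized_tube_lemma hKc isCompact_singleton hOopen hsub
  obtain ⟨δ, hδ, hball⟩ := Metric.isOpen_iff.mp hv 0 (h0v rfl)
  refine ⟨δ/2, by positivity, fun y hy => ?_⟩
  have hsum := hy
  rw [Fin.sum_univ_castSucc] at hsum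
  have hupd_last : (Function.update ε n (δ/2)) ((Fin.last n : Fin (n+1)) : ℕ) = δ/2 := by
    simp [Fin.last]
  have hupd_cast : ∀ i : Fin n, (Function.update ε n (δ/2)) ((Fin.castSucc i : Fin (n+1)) : ℕ) = ε (i : ℕ) := by
    intro i
    have : ((Fin.castSucc i : Fin (n+1)) : ℕ) = (i : ℕ) := rfl
    rw [this, Function.update_of_ne (by omega)]
  rw [hupd_last] at hsum
  have hsum' : (∑ i : Fin n, |y (Fin.castSucc i)| / ε (i : ℕ)) + |y (Fin.last n)| / (δ/2) ≤ 1 := by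
    refine le_trans (le_of_eq ?_) hsum
    congr 1
    exact Finset.sum_congr rfl fun i _ => by rw [hupd_cast]
  have hT : 0 ≤ |y (Fin.last n)| / (δ/2) := by positivity
  have hS : 0 ≤ ∑ i : Fin n, |y (Fin.castSucc i)| / ε (i : ℕ) :=
    Finset.sum_nonneg fun i _ => div_nonneg (abs_nonneg _) (hpos _).le
  have hyK : (fun i : Fin n => y (Fin.castSucc i)) ∈ K := by
    show (∑ i : Fin n, |y (Fin.castSucc i)| / ε (i : ℕ)) ≤ 1
    linarith
  have hlast : |y (Fin.last n)| ≤ δ/2 := by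
    have h1 : |y (Fin.last n)| / (δ/2) ≤ 1 := by linarith
    rw [div_le_one (by positivity)] at h1; exact h1
  have hmem : ((fun i : Fin n => y (Fin.castSucc i)), y (Fin.last n)) ∈ u ×ˢ v := by
    refine ⟨hKu hyK, hball ?_⟩
    simp only [Metric.mem_ball, Real.dist_eq, sub_zero]
    calc |y (Fin.last n)| ≤ δ/2 := hlast
      _ < δ := by linarith
  have := huv hmem
  have hphi : phiMap n ((fun i : Fin n => y (Fin.castSucc i)), y (Fin.last n)) = y := by
    funext i
    have hlt := i.isLt
    by_cases h : (i : ℕ) < n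
    · simp only [phiMap, dif_pos h]
      exact congrArg y (Fin.ext rfl)
    · simp only [phiMap, dif_neg h]
      exact congrArg y (Fin.ext (by simp only [Fin.val_last]; omega))
  · rw [hO, Set.mem_preimage, Set.mem_preimage, hphi] at this
    exact this

lemma uMap_zero_eq (y : Fin 0 → ℝ) : uMap 0 y = 0 := by
  refine Rinf.ext' (funext fun k => ?_)
  rw [uMap_val]
  exact dif_neg (by omega)

/-- Every open neighbourhood of `0` in `ℝ^∞` contains an open box. -/
lemma crux {U : Set Rinf} (hU : IsOpen U) (h0 : (0 : Rinf) ∈ U) :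
    ∃ ε : ℕ → ℝ, (∀ i, 0 < ε i) ∧ Bset ε 1 ⊆ U := by
  have hU' : ∀ n, IsOpen (uMap n ⁻¹' U) := isOpen_Rinf_iff.mp hU
  -- the type of "good data at stage n"
  let P : ℕ → Type := fun n => {ε : ℕ → ℝ //
    (∀ i, 0 < ε i) ∧ ∀ y : Fin n → ℝ, (∑ i : Fin n, |y i| / ε (i : ℕ)) ≤ 1 → uMap n y ∈ U}
  have base : P 0 := ⟨fun _ => 1, fun _ => one_pos, fun y _ => by rw [uMap_zero_eq]; exact h0⟩
  have hstep : ∀ n (p : P n), ∃ r : ℝ, 0 < r ∧ ∀ y : Fin (n+1) → ℝ,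
      (∑ i : Fin (n+1), |y i| / (Function.update p.1 n r) (i : ℕ)) ≤ 1 → uMap (n+1) y ∈ U := by
    intro n p
    obtain ⟨r, hr, h⟩ := step_lemma (hU' (n+1)) p.1 p.2.1 p.2.2
    exact ⟨r, hr, h⟩
  choose R hR1 hR2 using hstep
  let stp : ∀ n, P n → P (n+1) := fun n p => ⟨Function.update p.1 n (R n p), fun i => by
      rcases eq_or_ne i n with rfl | h
      · simpa using hR1 _ p
      · rw [Function.update_of_ne h]; exact p.2.1 i, hR2 n p⟩
  let g : ∀ n, P n := fun n => Nat.rec base stp n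
  have hg_agree : ∀ n i, i < n → (g (n+1)).1 i = (g n).1 i := by
    intro n i hi
    show (Function.update (g n).1 n (R n (g n))) i = (g n).1 i
    exact Function.update_of_ne (by omega) _ _
  set ε : ℕ → ℝ := fun i => (g (i+1)).1 i with hε
  have hstable : ∀ n i, i < n → (g n).1 i = ε i := by
    intro n
    induction n with
    | zero => omega
    | succ n ih =>
      intro i hi
      rcases eq_or_ne i n with rfl | h
      · rfl
      · rw [hg_agree n i (by omega)]; exact ih i (by omega)
  refine ⟨ε, fun i => (g (i+1)).2.1 i, fun x hx => ?_⟩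
  obtain ⟨N, hN⟩ := x.2
  have hxu : x = uMap N (fun i : Fin N => x.1 (i : ℕ)) := by
    refine Rinf.ext' (funext fun k => ?_)
    rw [uMap_val]
    by_cases h : k < N
    · rw [dif_pos h]
    · rw [dif_neg h]; exact hN k (by omega)
  have hq : qF ε x = ∑ i : Fin N, |x.1 (i : ℕ)| / ε (i : ℕ) := by
    conv_lhs => rw [hxu, qF_uMap]
  have hlt : (∑ i : Fin N, |x.1 (i : ℕ)| / (g N).1 (i : ℕ)) ≤ 1 := by
    have : (∑ i : Fin N, |x.1 (i : ℕ)| / (g N).1 (i : ℕ))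
        = ∑ i : Fin N, |x.1 (i : ℕ)| / ε (i : ℕ) := by
      refine Finset.sum_congr rfl fun i _ => by rw [hstable N (i : ℕ) i.isLt]
    rw [this, ← hq]
    exact (hx : qF ε x < 1).le
  have := (g N).2.2 (fun i : Fin N => x.1 (i : ℕ)) hlt
  rwa [← hxu] at this

lemma continuous_uMap (n : ℕ) : Continuous (uMap n) :=
  continuous_iSup_rng continuous_coinduced_rng

/-- translation by a fixed vector is continuous on `ℝ^∞` -/
lemma Rinf.continuous_add_const (v : Rinf) : Continuous (fun x : Rinf => v + x) := by
  rw [show (RinfTopology : TopologicalSpace Rinf)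
    = ⨆ n : ℕ, TopologicalSpace.coinduced (uMap n) inferInstance from rfl] at *
  refine continuous_iSup_dom.mpr fun n => ?_
  rw [continuous_coinduced_dom]
  obtain ⟨N, hN⟩ := v.2
  set M := max n N with hM
  have key : ∀ y : Fin n → ℝ, v + uMap n y
      = uMap M (fun i : Fin M => v.1 (i : ℕ) + (if h : (i : ℕ) < n then y ⟨i, h⟩ else 0)) := by
    intro y
    refine Rinf.ext' (funext fun k => ?_)
    rw [Rinf.val_add]
    show v.1 k + (uMap n y).1 k = _
    rw [uMap_val, uMap_val]
    by_cases hk : k < M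
    · rw [dif_pos hk]
    · rw [dif_neg hk, dif_neg (by omega), hN k (by omega)]
      simp
  have : ((fun x : Rinf => v + x) ∘ uMap n)
      = uMap M ∘ (fun y : Fin n → ℝ => (fun i : Fin M => v.1 (i : ℕ) + (if h : (i : ℕ) < n then y ⟨i, h⟩ else 0))) := by
    funext y
    exact key y
  rw [this]
  refine (continuous_uMap M).comp (continuous_pi fun i => ?_)
  by_cases h : (i : ℕ) < n
  · exact ((continuous_const (y := v.1 i)).add ((continuous_apply (⟨i, h⟩ : Fin n)))).congr fun y => by simp [h]
  · simpa [h] using continuous_const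


instance : ContinuousAdd Rinf := by
  refine ⟨?_⟩
  rw [continuous_def]
  intro U hU
  rw [isOpen_prod_iff]
  rintro a b hab
  set W : Set Rinf := (fun x : Rinf => (a + b) + x) ⁻¹' U with hW
  have hWopen : IsOpen W := (Rinf.continuous_add_const (a + b)).isOpen_preimage _ hU
  have hW0 : (0 : Rinf) ∈ W := by
    show (a + b) + 0 ∈ U
    rwa [add_zero]
  obtain ⟨ε, hpos, hsub⟩ := crux hWopen hW0
  refine ⟨(fun x : Rinf => x - a) ⁻¹' Bset ε 2⁻¹, (fun x : Rinf => x - b) ⁻¹' Bset ε 2⁻¹,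
    ?_, ?_, ?_, ?_, ?_⟩
  · have : (fun x : Rinf => x - a) = (fun x : Rinf => -a + x) := by
      funext x; rw [sub_eq_neg_add]
    rw [this]
    exact (Rinf.continuous_add_const (-a)).isOpen_preimage _ (isOpen_Bset ε 2⁻¹)
  · have : (fun x : Rinf => x - b) = (fun x : Rinf => -b + x) := by
      funext x; rw [sub_eq_neg_add]
    rw [this]
    exact (Rinf.continuous_add_const (-b)).isOpen_preimage _ (isOpen_Bset ε 2⁻¹)
  · show a - a ∈ Bset ε 2⁻¹
    rw [sub_self]
    exact zero_mem_Bset ε (by norm_num)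
  · show b - b ∈ Bset ε 2⁻¹
    rw [sub_self]
    exact zero_mem_Bset ε (by norm_num)
  · rintro ⟨x, y⟩ ⟨hx, hy⟩
    have hx' : qF ε (x - a) < 2⁻¹ := hx
    have hy' : qF ε (y - b) < 2⁻¹ := hy
    have hq : qF ε ((x - a) + (y - b)) < 1 := by
      have := qF_add_le ε hpos (x - a) (y - b)
      linarith
    have hmem : (x - a) + (y - b) ∈ W := hsub hq
    have : (a + b) + ((x - a) + (y - b)) ∈ U := hmem
    show x + y ∈ U
    have heq : x + y = (a + b) + ((x - a) + (y - b)) := by abel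
    rwa [heq]

instance : ContinuousSMul ℝ Rinf := by
  refine ⟨?_⟩
  rw [continuous_def]
  intro U hU
  rw [isOpen_prod_iff]
  rintro c a hca
  set W : Set Rinf := (fun x : Rinf => c • a + x) ⁻¹' U with hW
  have hWopen : IsOpen W := (Rinf.continuous_add_const (c • a)).isOpen_preimage _ hU
  have hW0 : (0 : Rinf) ∈ W := by
    show c • a + 0 ∈ U
    rwa [add_zero]
  obtain ⟨ε, hpos, hsub⟩ := crux hWopen hW0
  set M : ℝ := qF ε a with hM
  have hM0 : 0 ≤ M := qF_nonneg ε hpos a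
  set δ : ℝ := min 1 ((2 * (M + 1))⁻¹) with hδ
  have hδ0 : 0 < δ := lt_min one_pos (by positivity)
  set r : ℝ := (2 * (|c| + 2))⁻¹ with hr
  have hr0 : 0 < r := by positivity
  refine ⟨Metric.ball c δ, (fun x : Rinf => x - a) ⁻¹' Bset ε r, Metric.isOpen_ball, ?_, ?_, ?_, ?_⟩
  · have : (fun x : Rinf => x - a) = (fun x : Rinf => -a + x) := by
      funext x; rw [sub_eq_neg_add]
    rw [this]
    exact (Rinf.continuous_add_const (-a)).isOpen_preimage _ (isOpen_Bset ε r)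
  · exact Metric.mem_ball_self hδ0
  · show a - a ∈ Bset ε r
    rw [sub_self]
    exact zero_mem_Bset ε hr0
  · rintro ⟨c', x⟩ ⟨hc', hx⟩
    have hx' : qF ε (x - a) < r := hx
    have hcc' : |c' - c| < δ := by
      rw [Metric.mem_ball, Real.dist_eq] at hc'
      exact hc'
    have hc'bound : |c'| ≤ |c| + 1 := by
      have : |c'| ≤ |c' - c| + |c| := by
        calc |c'| = |(c' - c) + c| := by ring_nf
          _ ≤ |c' - c| + |c| := abs_add_le _ _
      have hδ1 : δ ≤ 1 := min_le_left _ _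
      linarith
    have key : c' • x = c • a + (c' • (x - a) + (c' - c) • a) := by module
    have hq1 : qF ε (c' • (x - a)) < 2⁻¹ := by
      rw [qF_smul]
      have h1 : |c'| * qF ε (x - a) ≤ (|c| + 1) * r :=
        mul_le_mul hc'bound hx'.le (qF_nonneg ε hpos _) (by positivity)
      have h2 : (|c| + 1) * r < 2⁻¹ := by
        rw [hr]
        rw [mul_inv_lt_iff₀ (by positivity)]
        nlinarith [abs_nonneg c]
      linarith
    have hq2 : qF ε ((c' - c) • a) < 2⁻¹ := by
      rw [qF_smul, ← hM]
      have h1 : |c' - c| * M ≤ δ * M := by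
        exact mul_le_mul_of_nonneg_right hcc'.le hM0
      have h2 : δ * M < 2⁻¹ := by
        have hδ2 : δ ≤ (2 * (M + 1))⁻¹ := min_le_right _ _
        have : δ * M ≤ (2 * (M + 1))⁻¹ * M :=
          mul_le_mul_of_nonneg_right hδ2 hM0
        have hlt : (2 * (M + 1))⁻¹ * M < 2⁻¹ := by
          rw [inv_mul_lt_iff₀ (by positivity)]
          nlinarith
        linarith
      linarith
    have hq : qF ε (c' • (x - a) + (c' - c) • a) < 1 := by
      have := qF_add_le ε hpos (c' • (x - a)) ((c' - c) • a)
      have h3 : (2:ℝ)⁻¹ + 2⁻¹ = 1 := by norm_num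
      linarith
    have hmem : c' • (x - a) + (c' - c) • a ∈ W := hsub hq
    show c' • x ∈ U
    rw [key]
    exact hmem

noncomputable def Lseq : Rinf →ₗ[ℝ] (ℕ → ℝ) := RinfSubmodule.subtype

lemma Lseq_apply (x : Rinf) : Lseq x = x.1 := rfl

lemma eRinf_val (m k : ℕ) : (eRinf m).1 k = if k = m then 1 else 0 := rfl

noncomputable def totE : (ℕ →₀ ℝ) →ₗ[ℝ] Rinf := Finsupp.linearCombination ℝ eRinf

lemma totE_val (c : ℕ →₀ ℝ) (k : ℕ) : (totE c).1 k = c k := by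
  rw [← Lseq_apply]
  show Lseq (Finsupp.linearCombination ℝ eRinf c) k = c k
  rw [Finsupp.apply_linearCombination]
  rw [Finsupp.linearCombination_apply]
  rw [Finsupp.sum, Finset.sum_apply]
  have : ∀ m ∈ c.support, (c m • (Lseq ∘ eRinf) m) k = if m = k then c m else 0 := by
    intro m _
    show c m * (eRinf m).1 k = _
    rw [eRinf_val]
    by_cases h : m = k
    · simp [h]
    · simp [h, Ne.symm h]
  rw [Finset.sum_congr rfl this, Finset.sum_ite_eq' c.support k (fun m => c m)]
  split
  · rfl
  · next h => exact (Finsupp.notMem_support_iff.mp h).symm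

lemma totE_injective : Function.Injective totE := by
  intro c d h
  ext k
  have := congrArg (fun x : Rinf => x.1 k) h
  simpa [totE_val] using this

lemma totE_surjective : Function.Surjective totE := by
  intro x
  obtain ⟨N, hN⟩ := x.2
  classical
  refine ⟨(Finsupp.onFinset (Finset.range N) (fun m => x.1 m) (fun m hm => by
    by_contra hc
    exact hm (hN m (by simpa using hc)))), ?_⟩
  refine Rinf.ext' (funext fun k => ?_)
  rw [totE_val]
  simp [Finsupp.onFinset_apply]

lemma span_eRinf_top : Submodule.span ℝ (Set.range eRinf) = ⊤ := by
  rw [← Finsupp.range_linearCombination]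
  exact LinearMap.range_eq_top.mpr totE_surjective

noncomputable def rinfEquiv : (ℕ →₀ ℝ) ≃ₗ[ℝ] Rinf :=
  LinearEquiv.ofBijective totE ⟨totE_injective, totE_surjective⟩

lemma rank_Rinf : Module.rank ℝ Rinf = Cardinal.aleph0 := by
  rw [← rinfEquiv.rank_eq, rank_finsupp_self]
  simp

section Vpart
variable {V : Type} [AddCommGroup V] [Module ℝ V]

/-- the parametrization of `X_n` -/
noncomputable def Lmap (f : Module.Basis (ℕ × ℕ) ℝ V) (n : ℕ) : (ℕ →₀ ℝ) →ₗ[ℝ] Rinf × V :=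
  LinearMap.prod totE (Finsupp.linearCombination ℝ (fun m => f (m, n)))

lemma Lmap_single (f : Module.Basis (ℕ × ℕ) ℝ V) (n m : ℕ) :
    Lmap f n (Finsupp.single m 1) = (eRinf m, f (m, n)) := by
  unfold Lmap totE
  simp [Finsupp.linearCombination_single]

lemma range_Lmap (f : Module.Basis (ℕ × ℕ) ℝ V) (n : ℕ) :
    LinearMap.range (Lmap f n)
      = Submodule.span ℝ {p : Rinf × V | ∃ m : ℕ, p = (eRinf m, f (m, n))} := by
  have h1 : (⊤ : Submodule ℝ (ℕ →₀ ℝ))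
      = Submodule.span ℝ (Set.range fun m : ℕ => Finsupp.single m (1 : ℝ)) := by
    have hb := Module.Basis.span_eq (Finsupp.basisSingleOne (R := ℝ) (ι := ℕ))
    rw [← hb]
    congr 1
  rw [LinearMap.range_eq_map, h1, Submodule.map_span]
  congr 1
  ext p
  constructor
  · rintro ⟨q, ⟨m, rfl⟩, rfl⟩
    exact ⟨m, by simpa using Lmap_single f n m⟩
  · rintro ⟨m, rfl⟩
    exact ⟨Finsupp.single m 1, ⟨m, rfl⟩, Lmap_single f n m⟩

lemma inter_bot (f : Module.Basis (ℕ × ℕ) ℝ V) {i j : ℕ} (hij : i ≠ j) :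
    LinearMap.range (Lmap f i) ⊓ LinearMap.range (Lmap f j) = ⊥ := by
  rw [eq_bot_iff]
  rintro p hp
  obtain ⟨⟨c, hc⟩, ⟨d, hd⟩⟩ := hp
  have hfst : totE c = totE d := by
    have := congrArg Prod.fst (hc.trans hd.symm)
    exact this
  have hcd : c = d := totE_injective hfst
  subst hcd
  have hsnd : Finsupp.linearCombination ℝ (fun m => f (m, i)) c
      = Finsupp.linearCombination ℝ (fun m => f (m, j)) c := by
    have := congrArg Prod.snd (hc.trans hd.symm)
    exact this
  have e : ∀ k : ℕ, Finsupp.linearCombination ℝ (fun m : ℕ => f (m, k)) c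
      = Finsupp.linearCombination ℝ ⇑f (Finsupp.mapDomain (fun m : ℕ => (m, k)) c) := by
    intro k
    rw [Finsupp.linearCombination_mapDomain]
    rfl
  rw [e i, e j] at hsnd
  have hmd : Finsupp.mapDomain (fun m : ℕ => (m, i)) c
      = Finsupp.mapDomain (fun m : ℕ => (m, j)) c := by
    have h1 := congrArg f.repr hsnd
    simp only [Module.Basis.repr_linearCombination] at h1
    exact h1
  have hc0 : c = 0 := by
    ext m
    have h1 : Finsupp.mapDomain (fun m : ℕ => (m, i)) c (m, i) = c m :=
      Finsupp.mapDomain_apply (fun a b hab => by simpa using (Prod.mk.injEq .. ▸ hab).1) c m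
    have h2 : Finsupp.mapDomain (fun m : ℕ => (m, j)) c (m, i) = 0 :=
      Finsupp.mapDomain_notin_range c (m, i) (by
        rintro ⟨m', hm'⟩
        exact hij ((congrArg Prod.snd hm').symm))
    rw [← h1, hmd, h2]
    rfl
  rw [← hc, hc0, map_zero]
  exact Submodule.zero_mem ⊥

end Vpart


/-- Let `V` be an `ℵ₀`-dimensional real vector space with the trivial
(indiscrete) topology and `X := ℝ^∞ × V` with the product topology.  Then `X` is a topological
vector space with `dim X = ℵ₀ < w(X)` (in particular `X` is not first-countable), and there is a
countably infinite family of dense linear subspaces of `X` with pairwise trivial intersections;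
concretely, `X_n := span {(e_m, f_m^n) : m ∈ ℕ}` works, where `{e_m}` is the canonical basis of
`ℝ^∞` and `{f_m^n}` is a basis of `V`. -/
theorem stmt4 (V : Type) [AddCommGroup V] [Module ℝ V] [tV : TopologicalSpace V]
    (htriv : tV = ⊤) (hV : Module.rank ℝ V = Cardinal.aleph0) (f : Module.Basis (ℕ × ℕ) ℝ V) :
    ContinuousAdd (Rinf × V) ∧ ContinuousSMul ℝ (Rinf × V) ∧
    Module.rank ℝ (Rinf × V) = Cardinal.aleph0 ∧
    Cardinal.aleph0 < tsWeight (Rinf × V) ∧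
    ¬ FirstCountableTopology (Rinf × V) ∧
    (∀ n : ℕ,
      Dense ((Submodule.span ℝ {p : Rinf × V | ∃ m : ℕ, p = (eRinf m, f (m, n))} :
        Submodule ℝ (Rinf × V)) : Set (Rinf × V))) ∧
    (∀ i j : ℕ, i ≠ j →
      Submodule.span ℝ {p : Rinf × V | ∃ m : ℕ, p = (eRinf m, f (m, i))} ⊓
        Submodule.span ℝ {p : Rinf × V | ∃ m : ℕ, p = (eRinf m, f (m, j))} = ⊥) ∧
    ∃ Y : ℕ → Submodule ℝ (Rinf × V),
      (∀ n, Dense (Y n : Set (Rinf × V))) ∧ ∀ i j, i ≠ j → Y i ⊓ Y j = ⊥ := by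
  haveI : Nonempty V := ⟨0⟩
  have hcont : ∀ {X : Type} [TopologicalSpace X] (g : X → V), Continuous g := by
    intro X _ g
    rw [continuous_iff_coinduced_le, htriv]
    exact le_top
  have hopen : ∀ O : Set V, IsOpen O → O = ∅ ∨ O = Set.univ := by
    intro O hO
    rw [htriv] at hO
    exact (TopologicalSpace.isOpen_top_iff O).mp hO
  haveI hAV : ContinuousAdd V := ⟨hcont _⟩
  haveI hSV : ContinuousSMul ℝ V := ⟨hcont _⟩
  -- non-first-countability
  have hnfc : ¬ FirstCountableTopology (Rinf × V) := by
    intro hfc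
    have hnV : (nhds (0 : V)) = ⊤ := by
      apply le_antisymm le_top
      intro s hs
      obtain ⟨O, hOs, hO, h0O⟩ := mem_nhds_iff.mp hs
      rcases hopen O hO with rfl | rfl
      · exact absurd h0O (Set.notMem_empty 0)
      · rw [Filter.mem_top]
        exact Set.eq_univ_of_univ_subset hOs
    haveI h1 : (nhds ((0, 0) : Rinf × V)).IsCountablyGenerated :=
      hfc.nhds_generated_countable _
    have h2 : nhds ((0, 0) : Rinf × V) = Filter.comap Prod.fst (nhds (0 : Rinf)) := by
      rw [nhds_prod_eq, hnV, Filter.prod_top]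
    haveI h3 : (nhds (0 : Rinf)).IsCountablyGenerated := by
      have hmap : nhds (0 : Rinf) = Filter.map Prod.fst (nhds ((0, 0) : Rinf × V)) := by
        rw [h2, Filter.map_comap_of_surjective Prod.fst_surjective]
      rw [hmap]
      infer_instance
    obtain ⟨s, hs⟩ := Filter.exists_antitone_basis (nhds (0 : Rinf))
    have hex : ∀ k : ℕ, ∃ t : ℝ, 0 < t ∧
        uMap (k+1) (fun i : Fin (k+1) => if (i : ℕ) = k then t else 0) ∈ s k := by
      intro k
      have hsk : s k ∈ nhds (0 : Rinf) := hs.toHasBasis.mem_of_mem trivial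
      obtain ⟨O, hOs, hO, h0O⟩ := mem_nhds_iff.mp hsk
      set Q : Set ℝ :=
        (fun t : ℝ => uMap (k+1) (fun i : Fin (k+1) => if (i : ℕ) = k then t else 0)) ⁻¹' O
        with hQ
      have hQo : IsOpen Q := by
        refine ((continuous_uMap (k+1)).comp (continuous_pi fun i => ?_)).isOpen_preimage _ hO
        by_cases h : (i : ℕ) = k
        · exact continuous_id.congr fun t => by simp [h]
        · simpa [h] using continuous_const
      have h0Q : (0 : ℝ) ∈ Q := by
        show uMap (k+1) _ ∈ O
        have he1 : (fun i : Fin (k+1) => if (i : ℕ) = k then (0:ℝ) else 0) = fun _ => 0 := by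
          funext i; split <;> rfl
        have he2 : uMap (k+1) (fun _ => (0:ℝ)) = 0 := by
          refine Rinf.ext' (funext fun m => ?_)
          rw [uMap_val]
          split <;> rfl
        rw [he1, he2]
        exact h0O
      obtain ⟨η, hη, hball⟩ := Metric.isOpen_iff.mp hQo 0 h0Q
      refine ⟨η/2, by positivity, hOs (hball ?_)⟩
      rw [Metric.mem_ball, Real.dist_eq, sub_zero, abs_of_pos (by positivity)]
      linarith
    choose t ht hts using hex
    set ε : ℕ → ℝ := fun k => t k / 2 with hε
    have hB : Bset ε 1 ∈ nhds (0 : Rinf) :=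
      (isOpen_Bset ε 1).mem_nhds (zero_mem_Bset ε one_pos)
    obtain ⟨k, -, hks⟩ := hs.toHasBasis.mem_iff.mp hB
    have hw : uMap (k+1) (fun i : Fin (k+1) => if (i : ℕ) = k then t k else 0) ∈ Bset ε 1 :=
      hks (hts k)
    have hq : qF ε (uMap (k+1) (fun i : Fin (k+1) => if (i : ℕ) = k then t k else 0)) = 2 := by
      rw [qF_uMap]
      rw [Finset.sum_eq_single_of_mem (⟨k, Nat.lt_succ_self k⟩ : Fin (k+1))
        (Finset.mem_univ _) (fun j _ hj => by
          have hjk : (j : ℕ) ≠ k := fun h => hj (Fin.ext h)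
          rw [if_neg hjk, abs_zero, zero_div])]
      show |if k = k then t k else 0| / (t k / 2) = 2
      rw [if_pos rfl, abs_of_pos (ht k)]
      have htk := (ht k).ne'
      field_simp
    have : qF ε (uMap (k+1) (fun i : Fin (k+1) => if (i : ℕ) = k then t k else 0)) < 1 := hw
    rw [hq] at this
    norm_num at this
  -- density
  have hdense : ∀ n : ℕ,
      Dense ((Submodule.span ℝ {p : Rinf × V | ∃ m : ℕ, p = (eRinf m, f (m, n))} :
        Submodule ℝ (Rinf × V)) : Set (Rinf × V)) := by
    intro n
    rw [dense_iff_inter_open]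
    rintro U hU ⟨⟨a, b⟩, hab⟩
    obtain ⟨c, hc⟩ := totE_surjective a
    have hslice : ∀ w : V, (a, w) ∈ U := by
      have hcont : Continuous (fun w : V => ((a : Rinf), w)) :=
        continuous_const.prodMk continuous_id
      have hQ : IsOpen ((fun w : V => ((a : Rinf), w)) ⁻¹' U) := hcont.isOpen_preimage _ hU
      rcases hopen _ hQ with h | h
      · exact absurd (show b ∈ (fun w : V => ((a : Rinf), w)) ⁻¹' U from hab)
          (h ▸ Set.notMem_empty b)
      · intro w
        exact (h ▸ Set.mem_univ w : w ∈ (fun w : V => ((a : Rinf), w)) ⁻¹' U)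
    refine ⟨(a, Finsupp.linearCombination ℝ (fun m : ℕ => f (m, n)) c), hslice _, ?_⟩
    rw [← range_Lmap]
    exact ⟨c, by rw [show Lmap f n c = (totE c, Finsupp.linearCombination ℝ
      (fun m : ℕ => f (m, n)) c) from rfl, hc]⟩
  -- weight
  have hwt : Cardinal.aleph0 < tsWeight (Rinf × V) := by
    by_contra hle
    push_neg at hle
    have hne : {c : Cardinal | ∃ B : Set (Set (Rinf × V)),
        TopologicalSpace.IsTopologicalBasis B ∧ #↥B = c}.Nonempty :=
      ⟨_, {U : Set (Rinf × V) | IsOpen U}, TopologicalSpace.isTopologicalBasis_opens, rfl⟩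
    obtain ⟨B, hB, hBc⟩ := csInf_mem hne
    have hle' : #↥B ≤ Cardinal.aleph0 := by
      rw [hBc]
      exact hle
    have hcB : B.Countable := Set.countable_coe_iff.mp (Cardinal.mk_le_aleph0_iff.mp hle')
    haveI := hB.secondCountableTopology hcB
    exact hnfc inferInstance
  -- rank
  have hrank : Module.rank ℝ (Rinf × V) = Cardinal.aleph0 := by
    rw [rank_prod', rank_Rinf, hV, Cardinal.aleph0_add_aleph0]
  -- intersections
  have hint : ∀ i j : ℕ, i ≠ j →
      Submodule.span ℝ {p : Rinf × V | ∃ m : ℕ, p = (eRinf m, f (m, i))} ⊓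
        Submodule.span ℝ {p : Rinf × V | ∃ m : ℕ, p = (eRinf m, f (m, j))} = ⊥ := by
    intro i j hij
    rw [← range_Lmap, ← range_Lmap]
    exact inter_bot f hij
  exact ⟨inferInstance, inferInstance, hrank, hwt, hnfc, hdense, hint,
    fun n => Submodule.span ℝ {p : Rinf × V | ∃ m : ℕ, p = (eRinf m, f (m, n))},
    hdense, hint⟩
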